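/- The following sets coincide: 𝒢^{(0)×} ∪ 𝒢^{(1)×} = {T ∈ 𝒢^× : (T^{-1})^̂ T ∈ 𝒢^{0×}} = {T ∈ 𝒢^× : (T^{-1})^̂ T ∈ Λ_r^{(0)×}} = {T ∈ 𝒢^× : (T^{-1})^̂ T ∈ (𝒢^0 + rad 𝒢^{(0)})^×}; moreover, if n is even, these sets also equal {T ∈ 𝒢^× : (T^{-1})^̂ T ∈ (𝒢^0 + 𝒢^n + rad 𝒢^{(0)})^×}. (This common set is the group P^±_{p,q,r}.) -/

import Mathlib

open Pointwise

noncomputable section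

namespace ClGA

variable (𝔽 : Type*) [RCLike 𝔽] (p q r : ℕ)

/-- The diagonal weights: `p` ones, `q` minus-ones, `r` zeros. -/
def w : Fin (p + q + r) → 𝔽 := fun i =>
  if (i : ℕ) < p then 1 else if (i : ℕ) < p + q then -1 else 0

/-- The quadratic form on `𝔽^n` whose Gram matrix is `diag(1,…,1,−1,…,−1,0,…,0)`. -/
def Q : QuadraticForm 𝔽 (Fin (p + q + r) → 𝔽) :=
  QuadraticMap.weightedSumSquares 𝔽 (w 𝔽 p q r)

/-- The degenerate Clifford geometric algebra `𝒢 = 𝒢_{p,q,r}`. -/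
abbrev G := CliffordAlgebra (Q 𝔽 p q r)

/-- The generators `e_a`, `a = 1, …, n`. -/
def e (a : Fin (p + q + r)) : G 𝔽 p q r :=
  CliffordAlgebra.ι (Q 𝔽 p q r) (Pi.single a 1)

/-- The even subspace `𝒢^{(0)}`: the `+1`-eigenspace of the grade involution. -/
def Geven : Submodule 𝔽 (G 𝔽 p q r) where
  carrier := {x | CliffordAlgebra.involute x = x}
  add_mem' := by
    intro a b ha hb
    simp only [Set.mem_setOf_eq, map_add] at ha hb ⊢
    rw [ha, hb]
  zero_mem' := by simp
  smul_mem' := by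
    intro c x hx
    simp only [Set.mem_setOf_eq, map_smul] at hx ⊢
    rw [hx]

/-- The odd subspace `𝒢^{(1)}`: the `−1`-eigenspace of the grade involution. -/
def Godd : Submodule 𝔽 (G 𝔽 p q r) where
  carrier := {x | CliffordAlgebra.involute x = -x}
  add_mem' := by
    intro a b ha hb
    simp only [Set.mem_setOf_eq, map_add] at ha hb ⊢
    rw [ha, hb, neg_add]
  zero_mem' := by simp
  smul_mem' := by
    intro c x hx
    simp only [Set.mem_setOf_eq, map_smul] at hx ⊢
    rw [hx, smul_neg]

/-- The grade-1 subspace `𝒢^1`, the span of the generators. -/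
def G1 : Submodule 𝔽 (G 𝔽 p q r) := Submodule.span 𝔽 (Set.range (e 𝔽 p q r))

/-- The scalar (grade-0) subspace `𝒢^0 = 𝔽·1`. -/
def G0 : Submodule 𝔽 (G 𝔽 p q r) := Submodule.span 𝔽 {(1 : G 𝔽 p q r)}

/-- The element `e_{1…n} = e_1 e_2 ⋯ e_n`. -/
def eTop : G 𝔽 p q r := (List.ofFn (e 𝔽 p q r)).prod

/-- The grade-`n` subspace `𝒢^n = 𝔽·e_{1…n}`. -/
def Gn : Submodule 𝔽 (G 𝔽 p q r) := Submodule.span 𝔽 {eTop 𝔽 p q r}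

/-- The Grassmann subalgebra `Λ_r` generated by the null generators. -/
def Λr : Subalgebra 𝔽 (G 𝔽 p q r) :=
  Algebra.adjoin 𝔽 {x | ∃ a : Fin (p + q + r), p + q ≤ (a : ℕ) ∧ x = e 𝔽 p q r a}

/-- `Λ_r` viewed as a subspace of `𝒢`. -/
def Λrs : Submodule 𝔽 (G 𝔽 p q r) := Subalgebra.toSubmodule (Λr 𝔽 p q r)

/-- The even part `Λ_r^{(0)} = Λ_r ∩ 𝒢^{(0)}`. -/
def Λr0 : Submodule 𝔽 (G 𝔽 p q r) := Λrs 𝔽 p q r ⊓ Geven 𝔽 p q r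

/-- The Jacobson radical `rad 𝒢` of `𝒢`: the two-sided ideal generated by the
null generators. -/
def radG : Submodule 𝔽 (G 𝔽 p q r) :=
  Submodule.span 𝔽 {x | ∃ (u v : G 𝔽 p q r) (a : Fin (p + q + r)),
    p + q ≤ (a : ℕ) ∧ x = u * e 𝔽 p q r a * v}

/-- `rad 𝒢^{(0)} = rad 𝒢 ∩ 𝒢^{(0)}`. -/
def radG0 : Submodule 𝔽 (G 𝔽 p q r) := radG 𝔽 p q r ⊓ Geven 𝔽 p q r

/-- For a subset `S ⊆ 𝒢`, `S^×` denotes those elements of `S` invertible in `𝒢`. -/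
def ux (S : Set (G 𝔽 p q r)) : Set (G 𝔽 p q r) := {x ∈ S | IsUnit x}

/-- `𝒢^{(0)×} ∪ 𝒢^{(1)×}` (the group `P^±_{p,q,r}`). -/
def Epm : Set (G 𝔽 p q r) :=
  ux 𝔽 p q r ↑(Geven 𝔽 p q r) ∪ ux 𝔽 p q r ↑(Godd 𝔽 p q r)

/-- `(T⁻¹)^̂ · T`, the grade involution of the inverse times `T`. -/
def tw (T : G 𝔽 p q r) : G 𝔽 p q r :=
  CliffordAlgebra.involute (Ring.inverse T) * T

/-- The invertible elements `T` with `T W T⁻¹ ⊆ W` (adjoint representation). -/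
def gammaAd (W : Submodule 𝔽 (G 𝔽 p q r)) : Set (G 𝔽 p q r) :=
  {T | IsUnit T ∧ ∀ U ∈ W, T * U * Ring.inverse T ∈ W}

/-- The invertible elements `T` with `T̂ W T⁻¹ ⊆ W` (twisted adjoint representation). -/
def gammaTw (W : Submodule 𝔽 (G 𝔽 p q r)) : Set (G 𝔽 p q r) :=
  {T | IsUnit T ∧ ∀ U ∈ W, CliffordAlgebra.involute T * U * Ring.inverse T ∈ W}


/-! ### Auxiliary lemmas -/

section Aux

variable {𝔽 : Type*} [RCLike 𝔽] {p q r : ℕ}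

open CliffordAlgebra

local notation "n" => p + q + r

lemma w_null {a : Fin n} (ha : p + q ≤ (a : ℕ)) : w 𝔽 p q r a = 0 := by
  simp only [w, if_neg (by omega : ¬ (a:ℕ) < p), if_neg (by omega : ¬ (a:ℕ) < p + q)]

lemma w_unit {a : Fin n} (ha : (a : ℕ) < p + q) : w 𝔽 p q r a ≠ 0 := by
  unfold w; split_ifs <;> simp

lemma Q_single (a : Fin n) : Q 𝔽 p q r (Pi.single a 1) = w 𝔽 p q r a := by
  classical
  rw [Q, QuadraticMap.weightedSumSquares_apply]
  rw [Finset.sum_eq_single a]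
  · simp
  · intro b _ hb; simp [Pi.single_apply, if_neg hb]
  · simp

lemma polar_single (a : Fin n) (v : Fin n → 𝔽) :
    QuadraticMap.polar (⇑(Q 𝔽 p q r)) (Pi.single a 1) v = 2 * w 𝔽 p q r a * v a := by
  classical
  rw [QuadraticMap.polar]
  simp only [Q, QuadraticMap.weightedSumSquares_apply]
  rw [← Finset.sum_sub_distrib, ← Finset.sum_sub_distrib]
  rw [Finset.sum_eq_single a]
  · simp only [Pi.add_apply, Pi.single_eq_same, smul_eq_mul]
    ring
  · intro b _ hb
    simp only [Pi.add_apply, Pi.single_apply, if_neg hb, smul_eq_mul]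
    ring
  · simp

lemma e_sq (a : Fin n) :
    e 𝔽 p q r a * e 𝔽 p q r a = algebraMap 𝔽 _ (w 𝔽 p q r a) := by
  rw [e, ι_sq_scalar, Q_single]

lemma e_mul_ι_add (a : Fin n) (v : Fin n → 𝔽) :
    e 𝔽 p q r a * ι (Q 𝔽 p q r) v + ι (Q 𝔽 p q r) v * e 𝔽 p q r a
      = algebraMap 𝔽 _ (2 * w 𝔽 p q r a * v a) := by
  rw [e, ι_mul_ι_add_swap, polar_single]

lemma e_anticomm {a b : Fin n} (hab : a ≠ b) :
    e 𝔽 p q r a * e 𝔽 p q r b = -(e 𝔽 p q r b * e 𝔽 p q r a) := by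
  refine eq_neg_of_add_eq_zero_left ?_
  have h := e_mul_ι_add (𝔽 := 𝔽) (p := p) (q := q) (r := r) a (Pi.single b 1)
  rw [show (ι (Q 𝔽 p q r)) (Pi.single b (1:𝔽)) = e 𝔽 p q r b from rfl] at h
  rw [h, Pi.single_apply, if_neg hab]
  simp

lemma swap_lemma {z : G 𝔽 p q r}
    (hz : ∀ v, z * ι (Q 𝔽 p q r) v = -(ι (Q 𝔽 p q r) v * z)) (x : G 𝔽 p q r) :
    z * x = involute x * z := by
  induction x using CliffordAlgebra.induction with
  | algebraMap c => rw [involute.commutes]; exact (Algebra.commutes c z).symm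
  | ι v => rw [involute_ι, hz v, neg_mul]
  | mul x y hx hy => rw [map_mul, ← mul_assoc, hx, mul_assoc, hy, ← mul_assoc]
  | add x y hx hy => rw [map_add, mul_add, add_mul, hx, hy]

lemma null_swap {a : Fin n} (ha : p + q ≤ (a : ℕ)) (x : G 𝔽 p q r) :
    e 𝔽 p q r a * x = involute x * e 𝔽 p q r a := by
  refine swap_lemma (fun v => ?_) x
  refine eq_neg_of_add_eq_zero_left ?_
  rw [e_mul_ι_add, w_null ha]
  simp

lemma pass_left (l : List (Fin n)) {b : Fin n} (h : ∀ c ∈ l, c ≠ b) :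
    e 𝔽 p q r b * (l.map (e 𝔽 p q r)).prod
      = ((-1 : 𝔽) ^ l.length) • ((l.map (e 𝔽 p q r)).prod * e 𝔽 p q r b) := by
  induction l with
  | nil => simp
  | cons c t ih =>
    have hbc : b ≠ c := fun hh => (h c List.mem_cons_self) hh.symm
    have ht : ∀ x ∈ t, x ≠ b := fun x hx => h x (List.mem_cons_of_mem c hx)
    simp only [List.map_cons, List.prod_cons, List.length_cons]
    rw [← mul_assoc, e_anticomm hbc, neg_mul, mul_assoc, ih ht, mul_smul_comm,
      pow_succ, mul_neg_one, neg_smul, mul_assoc]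

lemma pass_left' (l : List (Fin n)) {b : Fin n} (h : ∀ c ∈ l, c ≠ b) :
    (l.map (e 𝔽 p q r)).prod * e 𝔽 p q r b
      = ((-1 : 𝔽) ^ l.length) • (e 𝔽 p q r b * (l.map (e 𝔽 p q r)).prod) := by
  rw [pass_left l h, smul_smul, ← pow_add, ← two_mul, pow_mul, neg_one_sq, one_pow, one_smul]

lemma prod_nodup_swap {l : List (Fin n)} (hnd : l.Nodup) {b : Fin n} (hb : b ∈ l) :
    e 𝔽 p q r b * (l.map (e 𝔽 p q r)).prod
      = ((-1 : 𝔽) ^ (l.length - 1)) • ((l.map (e 𝔽 p q r)).prod * e 𝔽 p q r b) := by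
  induction l with
  | nil => simp at hb
  | cons c t ih =>
    rw [List.nodup_cons] at hnd
    obtain ⟨hct, hndt⟩ := hnd
    simp only [List.map_cons, List.prod_cons, List.length_cons, Nat.add_sub_cancel]
    rcases List.mem_cons.mp hb with hbc | hbt
    · subst hbc
      have ht : ∀ x ∈ t, x ≠ b := fun x hx hh => hct (hh ▸ hx)
      rw [mul_assoc, pass_left' t ht, mul_smul_comm, smul_smul, ← pow_add, ← two_mul,
        pow_mul, neg_one_sq, one_pow, one_smul]
    · have hbc : b ≠ c := fun hh => hct (hh ▸ hbt)
      rw [← mul_assoc, e_anticomm hbc, neg_mul, mul_assoc, ih hndt hbt, mul_smul_comm,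
        ← neg_smul, mul_assoc]
      congr 1
      rw [show t.length = (t.length - 1) + 1 from
        (by have := List.length_pos_iff.mpr (List.ne_nil_of_mem hbt); omega), pow_succ, mul_neg_one]
      have h2 : t.length - 1 + 1 - 1 = t.length - 1 := by omega
      rw [h2]

end Aux

section Aux2

variable {𝔽 : Type*} [RCLike 𝔽] {p q r : ℕ}

open CliffordAlgebra

local notation "n" => p + q + r

lemma eTop_eq : eTop 𝔽 p q r = ((List.finRange n).map (e 𝔽 p q r)).prod := by
  rw [eTop, List.ofFn_eq_map]

lemma e_mul_eTop_swap (hn2 : Even n) (b : Fin n) :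
    e 𝔽 p q r b * eTop 𝔽 p q r = -(eTop 𝔽 p q r * e 𝔽 p q r b) := by
  rw [eTop_eq, prod_nodup_swap (List.nodup_finRange n) (List.mem_finRange b)]
  rw [List.length_finRange]
  obtain ⟨m, hm⟩ := hn2
  have hn1 : 1 ≤ n := by
    have := b.isLt; omega
  rw [show n - 1 = 2 * (m - 1) + 1 by omega, pow_succ, pow_mul, neg_one_sq, one_pow,
    one_mul, neg_one_smul]

lemma ι_eq_sum (v : Fin n → 𝔽) :
    ι (Q 𝔽 p q r) v = ∑ b, v b • e 𝔽 p q r b := by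
  conv_lhs => rw [pi_eq_sum_univ v]
  rw [map_sum]
  refine Finset.sum_congr rfl fun b _ => ?_
  rw [map_smul]
  congr 1
  rw [e]
  congr 1
  ext j
  simp [Pi.single_apply, eq_comm]

lemma eTop_swap (hn2 : Even n) (x : G 𝔽 p q r) :
    eTop 𝔽 p q r * x = involute x * eTop 𝔽 p q r := by
  refine swap_lemma (fun v => ?_) x
  rw [ι_eq_sum, Finset.sum_mul, Finset.mul_sum]
  rw [← Finset.sum_neg_distrib]
  refine Finset.sum_congr rfl fun b _ => ?_
  rw [smul_mul_assoc, mul_smul_comm, ← smul_neg]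
  congr 1
  have h := e_mul_eTop_swap (𝔽 := 𝔽) (p := p) (q := q) (r := r) hn2 b
  rw [eq_neg_iff_add_eq_zero] at h ⊢
  linear_combination (norm := noncomm_ring) h

lemma prod_map_neg' (l : List (G 𝔽 p q r)) :
    (l.map Neg.neg).prod = (-1 : G 𝔽 p q r) ^ l.length * l.prod := by
  induction l with
  | nil => simp
  | cons a t ih =>
    rw [List.map_cons, List.prod_cons, List.prod_cons, List.length_cons, ih, pow_succ,
      neg_mul, ← mul_assoc, ← ((Commute.neg_one_left a).pow_left t.length).eq, mul_assoc,
      mul_neg_one, neg_mul]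

lemma involute_eTop (hn2 : Even n) :
    involute (eTop 𝔽 p q r) = eTop 𝔽 p q r := by
  rw [eTop]
  rw [show ((involute (M := Fin n → 𝔽) (Q := Q 𝔽 p q r)) : G 𝔽 p q r → G 𝔽 p q r)
      (List.ofFn (e 𝔽 p q r)).prod
    = ((List.ofFn (e 𝔽 p q r)).map (involute (Q := Q 𝔽 p q r))).prod from
    map_list_prod (involute : G 𝔽 p q r →ₐ[𝔽] G 𝔽 p q r).toRingHom _]
  have h1 : (List.ofFn (e 𝔽 p q r)).map (involute (Q := Q 𝔽 p q r))
      = (List.ofFn (e 𝔽 p q r)).map Neg.neg := by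
    refine List.map_congr_left fun x hx => ?_
    obtain ⟨a, rfl⟩ := List.mem_ofFn.mp hx
    rw [e, involute_ι]
  rw [h1, prod_map_neg', List.length_ofFn, hn2.neg_one_pow, one_mul]

lemma prod_sq_scalar (l : List (Fin n)) (hnd : l.Nodup) (hu : ∀ a ∈ l, w 𝔽 p q r a ≠ 0) :
    ∃ ε : 𝔽, ε ≠ 0 ∧ (l.map (e 𝔽 p q r)).prod * (l.map (e 𝔽 p q r)).prod
      = algebraMap 𝔽 _ ε := by
  induction l with
  | nil => exact ⟨1, one_ne_zero, by simp⟩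
  | cons c t ih =>
    rw [List.nodup_cons] at hnd
    obtain ⟨hct, hndt⟩ := hnd
    obtain ⟨ε', hε', hP⟩ := ih hndt (fun a ha => hu a (List.mem_cons_of_mem c ha))
    have ht : ∀ x ∈ t, x ≠ c := fun x hx hh => hct (hh ▸ hx)
    refine ⟨(-1 : 𝔽) ^ t.length * (w 𝔽 p q r c * ε'), ?_, ?_⟩
    · exact mul_ne_zero (pow_ne_zero _ (neg_ne_zero.mpr one_ne_zero))
        (mul_ne_zero (hu c List.mem_cons_self) hε')
    · simp only [List.map_cons, List.prod_cons]
      rw [mul_assoc, ← mul_assoc (List.map (e 𝔽 p q r) t).prod (e 𝔽 p q r c),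
        pass_left' t ht, smul_mul_assoc, mul_smul_comm,
        ← mul_assoc (e 𝔽 p q r c) (e 𝔽 p q r c * (List.map (e 𝔽 p q r) t).prod),
        ← mul_assoc (e 𝔽 p q r c) (e 𝔽 p q r c), e_sq,
        mul_assoc (algebraMap 𝔽 (G 𝔽 p q r) (w 𝔽 p q r c)), hP,
        ← map_mul, Algebra.smul_def ((-1 : 𝔽) ^ t.length), ← map_mul]

lemma eTop_sq_scalar (hr : r = 0) :
    ∃ ε : 𝔽, ε ≠ 0 ∧ eTop 𝔽 p q r * eTop 𝔽 p q r = algebraMap 𝔽 _ ε := by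
  rw [eTop_eq]
  refine prod_sq_scalar _ (List.nodup_finRange n) fun a _ => ?_
  exact w_unit (by have := a.isLt; omega)

end Aux2

section Aux3

variable {𝔽 : Type*} [RCLike 𝔽] {p q r : ℕ}

open CliffordAlgebra

local notation "n" => p + q + r

lemma one_ne_zero_G : (1 : G 𝔽 p q r) ≠ 0 := by
  letI : Invertible (2 : 𝔽) := invertibleOfNonzero two_ne_zero
  exact one_ne_zero

lemma algebraMap_injG : Function.Injective (algebraMap 𝔽 (G 𝔽 p q r)) := by
  intro x y h
  by_contra hxy
  have hsub : algebraMap 𝔽 (G 𝔽 p q r) (x - y) = 0 := by rw [map_sub, h, sub_self]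
  have h1 : (1 : G 𝔽 p q r) = 0 := by
    calc (1 : G 𝔽 p q r) = algebraMap 𝔽 _ ((x - y)⁻¹ * (x - y)) := by
          rw [inv_mul_cancel₀ (sub_ne_zero.mpr hxy), map_one]
      _ = algebraMap 𝔽 _ ((x - y)⁻¹) * algebraMap 𝔽 _ (x - y) := by rw [map_mul]
      _ = 0 := by rw [hsub, mul_zero]
  exact one_ne_zero_G h1

lemma e_ne_zero (b : Fin n) : e 𝔽 p q r b ≠ 0 := by
  letI : Invertible (2 : 𝔽) := invertibleOfNonzero two_ne_zero
  intro h
  rw [e] at h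
  have h2 : (equivExterior (Q 𝔽 p q r)) (ι (Q 𝔽 p q r) (Pi.single b 1)) = 0 := by
    rw [h]; exact (equivExterior (Q 𝔽 p q r)).map_zero
  rw [equivExterior, changeFormEquiv_apply, changeForm_ι] at h2
  have h3 := (ExteriorAlgebra.ι_eq_zero_iff (R := 𝔽) _).mp h2
  have h4 := congrFun h3 b
  rw [Pi.single_eq_same] at h4
  exact one_ne_zero h4

lemma scalar_eTop_indep (hn2 : Even n) (hn1 : 1 ≤ n) {k d : 𝔽}
    (h : algebraMap 𝔽 (G 𝔽 p q r) k = d • eTop 𝔽 p q r) : k = 0 := by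
  by_contra hk
  set b : Fin n := ⟨0, hn1⟩ with hb
  set x := algebraMap 𝔽 (G 𝔽 p q r) k * e 𝔽 p q r b with hx
  have h1 : x = -x := by
    calc x = algebraMap 𝔽 (G 𝔽 p q r) k * e 𝔽 p q r b := hx
      _ = e 𝔽 p q r b * algebraMap 𝔽 (G 𝔽 p q r) k := Algebra.commutes k _
      _ = e 𝔽 p q r b * (d • eTop 𝔽 p q r) := by rw [h]
      _ = d • (e 𝔽 p q r b * eTop 𝔽 p q r) := (mul_smul_comm _ _ _)
      _ = d • (-(eTop 𝔽 p q r * e 𝔽 p q r b)) := by rw [e_mul_eTop_swap hn2 b]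
      _ = -((d • eTop 𝔽 p q r) * e 𝔽 p q r b) := by rw [smul_neg, smul_mul_assoc]
      _ = -x := by rw [← h, hx]
  have h2 : (2 : 𝔽) • x = 0 := by
    rw [two_smul]
    nth_rewrite 2 [h1]
    rw [add_neg_cancel]
  have h3 : x = 0 := by
    have h4 := congrArg (fun y => (2 : 𝔽)⁻¹ • y) h2
    simpa [smul_smul, inv_mul_cancel₀ (two_ne_zero (α := 𝔽))] using h4
  have h5 : k • e 𝔽 p q r b = 0 := by rw [Algebra.smul_def]; exact h3
  have h6 : e 𝔽 p q r b = 0 := by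
    have h7 := congrArg (fun y => k⁻¹ • y) h5
    simpa [smul_smul, inv_mul_cancel₀ hk] using h7
  exact e_ne_zero b h6

lemma mem_radG_gen {a : Fin n} (ha : p + q ≤ (a : ℕ)) (u v : G 𝔽 p q r) :
    u * e 𝔽 p q r a * v ∈ radG 𝔽 p q r :=
  Submodule.subset_span ⟨u, v, a, ha, rfl⟩

lemma e_mem_radG {a : Fin n} (ha : p + q ≤ (a : ℕ)) : e 𝔽 p q r a ∈ radG 𝔽 p q r := by
  have := mem_radG_gen (𝔽 := 𝔽) ha 1 1
  simpa using this

lemma radG_mul_left (x : G 𝔽 p q r) {m : G 𝔽 p q r} (hm : m ∈ radG 𝔽 p q r) :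
    x * m ∈ radG 𝔽 p q r := by
  induction hm using Submodule.span_induction with
  | mem z hz =>
    obtain ⟨u, v, a, ha, rfl⟩ := hz
    rw [← mul_assoc, ← mul_assoc]
    exact mem_radG_gen ha (x * u) v
  | zero => rw [mul_zero]; exact zero_mem _
  | add y z _ _ hy hz => rw [mul_add]; exact add_mem hy hz
  | smul c y _ hy => rw [mul_smul_comm]; exact Submodule.smul_mem _ _ hy

lemma radG_mul_right {m : G 𝔽 p q r} (hm : m ∈ radG 𝔽 p q r) (y : G 𝔽 p q r) :
    m * y ∈ radG 𝔽 p q r := by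
  induction hm using Submodule.span_induction with
  | mem z hz =>
    obtain ⟨u, v, a, ha, rfl⟩ := hz
    have h1 := mem_radG_gen ha u (v * y)
    rwa [← mul_assoc] at h1
  | zero => rw [zero_mul]; exact zero_mem _
  | add z z' _ _ hz hz' => rw [add_mul]; exact add_mem hz hz'
  | smul c z _ hz => rw [smul_mul_assoc]; exact Submodule.smul_mem _ _ hz

lemma prod_swap_all {l : List (Fin n)} (h : ∀ a ∈ l, p + q ≤ (a : ℕ)) (z : G 𝔽 p q r) :
    ∃ z', (l.map (e 𝔽 p q r)).prod * z = z' * (l.map (e 𝔽 p q r)).prod := by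
  induction l with
  | nil => exact ⟨z, by simp⟩
  | cons c t ih =>
    obtain ⟨z1, hz1⟩ := ih (fun a ha => h a (List.mem_cons_of_mem c ha))
    refine ⟨involute z1, ?_⟩
    simp only [List.map_cons, List.prod_cons]
    rw [mul_assoc, hz1, ← mul_assoc, null_swap (h c List.mem_cons_self) z1, mul_assoc]

lemma prod_dup_zero {l : List (Fin n)} (h : ∀ a ∈ l, p + q ≤ (a : ℕ)) (hnd : ¬ l.Nodup) :
    (l.map (e 𝔽 p q r)).prod = 0 := by
  induction l with
  | nil => exact absurd List.nodup_nil hnd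
  | cons c t ih =>
    simp only [List.map_cons, List.prod_cons]
    rw [List.nodup_cons, not_and_or] at hnd
    rcases hnd with hct | hndt
    · rw [not_not] at hct
      obtain ⟨t1, t2, rfl⟩ := List.append_of_mem hct
      have hc := h c List.mem_cons_self
      rw [List.map_append, List.prod_append, List.map_cons, List.prod_cons]
      rw [← mul_assoc, null_swap hc, mul_assoc, ← mul_assoc (e 𝔽 p q r c) (e 𝔽 p q r c),
        e_sq, w_null hc, map_zero, zero_mul, mul_zero]
    · rw [ih (fun a ha => h a (List.mem_cons_of_mem c ha)) hndt, mul_zero]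

lemma nodup_of_null_long {l : List (Fin n)} (h : ∀ a ∈ l, p + q ≤ (a : ℕ))
    (hlen : r + 1 ≤ l.length) : ¬ l.Nodup := by
  intro hnd
  classical
  have h1 : l.toFinset ⊆ Finset.univ.filter (fun a : Fin n => p + q ≤ (a : ℕ)) := by
    intro a ha
    rw [Finset.mem_filter]
    exact ⟨Finset.mem_univ a, h a (List.mem_toFinset.mp ha)⟩
  have h2 : (Finset.univ.filter (fun a : Fin n => p + q ≤ (a : ℕ))) ⊆
      Finset.univ.image (fun i : Fin r => (⟨p + q + (i : ℕ), by omega⟩ : Fin n)) := by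
    intro a ha
    rw [Finset.mem_filter] at ha
    rw [Finset.mem_image]
    have h3 := a.isLt
    refine ⟨⟨(a : ℕ) - (p + q), by omega⟩, Finset.mem_univ _, ?_⟩
    ext
    simp only
    omega
  have h4 := Finset.card_le_card (h1.trans h2)
  have h5 : (Finset.univ.image
      (fun i : Fin r => (⟨p + q + (i : ℕ), by omega⟩ : Fin n))).card ≤ r := by
    refine le_trans (Finset.card_image_le) ?_
    simp
  rw [List.toFinset_card_of_nodup hnd] at h4
  omega

lemma span_step {k : ℕ} {x m : G 𝔽 p q r}
    (hx : x ∈ Submodule.span 𝔽 {x : G 𝔽 p q r | ∃ (y : G 𝔽 p q r) (l : List (Fin n)),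
      l.length = k ∧ (∀ a ∈ l, p + q ≤ (a : ℕ)) ∧ x = y * (l.map (e 𝔽 p q r)).prod})
    (hm : m ∈ radG 𝔽 p q r) :
    x * m ∈ Submodule.span 𝔽 {x : G 𝔽 p q r | ∃ (y : G 𝔽 p q r) (l : List (Fin n)),
      l.length = k + 1 ∧ (∀ a ∈ l, p + q ≤ (a : ℕ)) ∧ x = y * (l.map (e 𝔽 p q r)).prod} := by
  induction hx using Submodule.span_induction with
  | mem x hx =>
    obtain ⟨y, l, hlen, hnull, rfl⟩ := hx
    induction hm using Submodule.span_induction with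
    | mem z hz =>
      obtain ⟨u, v, a, ha, rfl⟩ := hz
      obtain ⟨z', hz'⟩ := prod_swap_all hnull (u * involute v)
      have key : y * (l.map (e 𝔽 p q r)).prod * (u * e 𝔽 p q r a * v)
          = (y * z') * (((l ++ [a]).map (e 𝔽 p q r)).prod) := by
        rw [List.map_append, List.prod_append]
        simp only [List.map_cons, List.map_nil, List.prod_cons, List.prod_nil, mul_one]
        rw [mul_assoc u (e 𝔽 p q r a) v, null_swap ha v, ← mul_assoc u (involute v),
          ← mul_assoc (y * (l.map (e 𝔽 p q r)).prod),
          mul_assoc y (l.map (e 𝔽 p q r)).prod (u * involute v), hz',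
          ← mul_assoc y z' (l.map (e 𝔽 p q r)).prod,
          mul_assoc (y * z') (l.map (e 𝔽 p q r)).prod (e 𝔽 p q r a)]
      rw [key]
      refine Submodule.subset_span ⟨y * z', l ++ [a], by simp [hlen], ?_, rfl⟩
      intro a' ha'
      rcases List.mem_append.mp ha' with h' | h'
      · exact hnull _ h'
      · rw [List.mem_singleton.mp h']; exact ha
    | zero => rw [mul_zero]; exact zero_mem _
    | add z z' _ _ hz hz' => rw [mul_add]; exact add_mem hz hz'
    | smul c z _ hz => rw [mul_smul_comm]; exact Submodule.smul_mem _ _ hz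
  | zero => rw [zero_mul]; exact zero_mem _
  | add x y _ _ hx hy => rw [add_mul]; exact add_mem hx hy
  | smul c x _ hx => rw [smul_mul_assoc]; exact Submodule.smul_mem _ _ hx

lemma pow_mem_aux (k : ℕ) {m : G 𝔽 p q r} (hm : m ∈ radG 𝔽 p q r) :
    m ^ (k + 1) ∈ Submodule.span 𝔽 {x : G 𝔽 p q r | ∃ (y : G 𝔽 p q r) (l : List (Fin n)),
      l.length = k + 1 ∧ (∀ a ∈ l, p + q ≤ (a : ℕ)) ∧ x = y * (l.map (e 𝔽 p q r)).prod} := by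
  induction k with
  | zero =>
    rw [pow_one]
    refine Submodule.span_le.mpr ?_ hm
    rintro x ⟨u, v, a, ha, rfl⟩
    refine Submodule.subset_span ⟨u * involute v, [a], rfl, (by simpa using ha), ?_⟩
    simp only [List.map_cons, List.map_nil, List.prod_cons, List.prod_nil, mul_one]
    rw [mul_assoc, null_swap ha v, ← mul_assoc]
  | succ k ih =>
    rw [pow_succ]
    exact span_step ih hm

lemma radG_nilp {m : G 𝔽 p q r} (hm : m ∈ radG 𝔽 p q r) : m ^ (r + 1) = 0 := by
  rcases Nat.exists_eq_add_of_le (Nat.one_le_iff_ne_zero.mpr (Nat.succ_ne_zero r)) with h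
  have h1 := pow_mem_aux r hm
  have h2 : Submodule.span 𝔽 {x : G 𝔽 p q r | ∃ (y : G 𝔽 p q r) (l : List (Fin n)),
      l.length = r + 1 ∧ (∀ a ∈ l, p + q ≤ (a : ℕ)) ∧ x = y * (l.map (e 𝔽 p q r)).prod}
      ≤ ⊥ := by
    refine Submodule.span_le.mpr ?_
    rintro x ⟨y, l, hlen, hnull, rfl⟩
    rw [Submodule.bot_coe, Set.mem_singleton_iff]
    rw [prod_dup_zero hnull (nodup_of_null_long hnull (le_of_eq hlen.symm)), mul_zero]
  simpa using h2 h1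

end Aux3

section Aux4

variable {𝔽 : Type*} [RCLike 𝔽] {p q r : ℕ}

open CliffordAlgebra

local notation "n" => p + q + r

lemma mem_G0_iff {x : G 𝔽 p q r} : x ∈ G0 𝔽 p q r ↔ ∃ c : 𝔽, x = algebraMap 𝔽 _ c := by
  rw [G0, Submodule.mem_span_singleton]
  constructor
  · rintro ⟨c, rfl⟩; exact ⟨c, by rw [Algebra.algebraMap_eq_smul_one]⟩
  · rintro ⟨c, rfl⟩; exact ⟨c, by rw [Algebra.algebraMap_eq_smul_one]⟩

lemma mem_Geven_iff {x : G 𝔽 p q r} : x ∈ Geven 𝔽 p q r ↔ involute x = x := Iff.rfl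

lemma mem_Godd_iff {x : G 𝔽 p q r} : x ∈ Godd 𝔽 p q r ↔ involute x = -x := Iff.rfl

lemma G0_le_Geven : G0 𝔽 p q r ≤ Geven 𝔽 p q r := by
  intro x hx
  obtain ⟨c, rfl⟩ := mem_G0_iff.mp hx
  rw [mem_Geven_iff, involute.commutes]

lemma Gn_le_Geven (hn2 : Even n) : Gn 𝔽 p q r ≤ Geven 𝔽 p q r := by
  intro x hx
  obtain ⟨d, rfl⟩ := (Submodule.mem_span_singleton).mp hx
  rw [mem_Geven_iff, map_smul, involute_eTop hn2]

lemma Λr_le_G0_sup_radG : Λrs 𝔽 p q r ≤ G0 𝔽 p q r ⊔ radG 𝔽 p q r := by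
  intro x hx
  have hx' : x ∈ Λr 𝔽 p q r := hx
  clear hx
  induction hx' using Algebra.adjoin_induction with
  | mem z hz =>
    obtain ⟨a, ha, rfl⟩ := hz
    exact Submodule.mem_sup_right (e_mem_radG ha)
  | algebraMap c =>
    exact Submodule.mem_sup_left (mem_G0_iff.mpr ⟨c, rfl⟩)
  | add x y _ _ hx hy => exact add_mem hx hy
  | mul x y _ _ hx hy =>
    obtain ⟨y0, hy0, m0, hm0, rfl⟩ := Submodule.mem_sup.mp hx
    obtain ⟨y1, hy1, m1, hm1, rfl⟩ := Submodule.mem_sup.mp hy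
    obtain ⟨c0, rfl⟩ := mem_G0_iff.mp hy0
    obtain ⟨c1, rfl⟩ := mem_G0_iff.mp hy1
    rw [add_mul, mul_add, mul_add, ← map_mul]
    exact add_mem (add_mem (Submodule.mem_sup_left (mem_G0_iff.mpr ⟨c0 * c1, rfl⟩))
      (Submodule.mem_sup_right (radG_mul_left _ hm1)))
      (add_mem (Submodule.mem_sup_right (radG_mul_right hm0 _))
      (Submodule.mem_sup_right (radG_mul_right hm0 _)))

lemma lemA {s : G 𝔽 p q r} (hs : s ∈ G0 𝔽 p q r ⊔ radG 𝔽 p q r) (hsq : s * s = 1) :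
    s = 1 ∨ s = -1 := by
  obtain ⟨y, hy, m, hm, rfl⟩ := Submodule.mem_sup.mp hs
  obtain ⟨c, rfl⟩ := mem_G0_iff.mp hy
  set aC := algebraMap 𝔽 (G 𝔽 p q r) c with haC
  have key : m * ((aC + m) + aC) = algebraMap 𝔽 _ (1 - c * c) := by
    have h1 : (aC + m) - aC = m := by abel
    calc m * ((aC + m) + aC) = ((aC + m) - aC) * ((aC + m) + aC) := by rw [h1]
      _ = (aC + m) * (aC + m) + (aC + m) * aC - aC * (aC + m) - aC * aC := by noncomm_ring
      _ = 1 + (aC + m) * aC - (aC + m) * aC - aC * aC := by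
          rw [hsq, Algebra.commutes c (aC + m)]
      _ = 1 - aC * aC := by abel
      _ = algebraMap 𝔽 _ (1 - c * c) := by rw [map_sub, map_one, map_mul]
  have hrad : algebraMap 𝔽 (G 𝔽 p q r) (1 - c * c) ∈ radG 𝔽 p q r := by
    rw [← key]; exact radG_mul_right hm _
  have hc2 : c * c = 1 := by
    have hnil := radG_nilp hrad
    rw [← map_pow] at hnil
    have h2 : (1 - c * c) ^ (r + 1) = 0 := algebraMap_injG (by rw [hnil, map_zero])
    have h3 : 1 - c * c = 0 := pow_eq_zero_iff (Nat.succ_ne_zero r) |>.mp h2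
    exact (sub_eq_zero.mp h3).symm
  have hc0 : c ≠ 0 := by
    intro h
    rw [h, zero_mul] at hc2
    exact zero_ne_one hc2
  have hu : IsUnit ((aC + m) + aC) := by
    have h4 : (aC + m) + aC = algebraMap 𝔽 (G 𝔽 p q r) (2 * c) + m := by
      rw [two_mul, map_add]; abel
    rw [h4]
    refine IsNilpotent.isUnit_add_left_of_commute ⟨r + 1, radG_nilp hm⟩
      ((isUnit_iff_ne_zero.mpr (mul_ne_zero two_ne_zero hc0)).map (algebraMap 𝔽 _)) ?_
    exact (Algebra.commutes (2 * c) m).symm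
  have hm0 : m = 0 := by
    have h5 : m * ((aC + m) + aC) = 0 := by
      rw [key, hc2, sub_self, map_zero]
    exact (IsUnit.mul_left_eq_zero hu).mp h5
  rcases mul_self_eq_one_iff.mp hc2 with hc | hc
  · left; rw [hm0, add_zero, haC, hc, map_one]
  · right; rw [hm0, add_zero, haC, hc, map_neg, map_one]

lemma half_cancel {x y : G 𝔽 p q r} (h : x + x = y + y) : x = y := by
  have h1 : (2 : 𝔽) • x = (2 : 𝔽) • y := by rw [two_smul, two_smul]; exact h
  have h2 := congrArg (fun z => (2 : 𝔽)⁻¹ • z) h1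
  simpa [smul_smul, inv_mul_cancel₀ (two_ne_zero (α := 𝔽))] using h2

lemma tw_unit (u : (G 𝔽 p q r)ˣ) :
    tw 𝔽 p q r ↑u = involute (↑u⁻¹ : G 𝔽 p q r) * ↑u := by
  rw [tw, Ring.inverse_unit]

lemma involute_tw_mul (u : (G 𝔽 p q r)ˣ) :
    involute (tw 𝔽 p q r ↑u) * tw 𝔽 p q r ↑u = 1 := by
  rw [tw_unit, map_mul, involute_involute]
  calc (↑u⁻¹ : G 𝔽 p q r) * involute ↑u * (involute ↑u⁻¹ * ↑u)
      = ↑u⁻¹ * (involute ↑u * involute ↑u⁻¹) * ↑u := by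
        rw [mul_assoc, mul_assoc, mul_assoc]
    _ = ↑u⁻¹ * involute ((↑u : G 𝔽 p q r) * ↑u⁻¹) * ↑u := by rw [map_mul]
    _ = 1 := by rw [Units.mul_inv, map_one, mul_one, Units.inv_mul]

lemma tw_sq_one {T : G 𝔽 p q r} (hT : IsUnit T)
    (he : involute (tw 𝔽 p q r T) = tw 𝔽 p q r T) :
    tw 𝔽 p q r T * tw 𝔽 p q r T = 1 := by
  obtain ⟨u, rfl⟩ := hT
  nth_rewrite 1 [← he]
  exact involute_tw_mul u

lemma tw_of_even {T : G 𝔽 p q r} (hT : IsUnit T) (he : involute T = T) :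
    tw 𝔽 p q r T = 1 := by
  obtain ⟨u, rfl⟩ := hT
  rw [tw_unit]
  conv_lhs => rw [← he]
  rw [← map_mul, Units.inv_mul, map_one]

lemma tw_of_odd {T : G 𝔽 p q r} (hT : IsUnit T) (ho : involute T = -T) :
    tw 𝔽 p q r T = -1 := by
  obtain ⟨u, rfl⟩ := hT
  rw [tw_unit]
  have h1 : (↑u : G 𝔽 p q r) = -involute ↑u := by rw [ho, neg_neg]
  conv_lhs => rw [h1]
  rw [mul_neg, ← map_mul, Units.inv_mul, map_one]

lemma even_of_tw_one {u : (G 𝔽 p q r)ˣ} (h : tw 𝔽 p q r ↑u = 1) :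
    involute (↑u : G 𝔽 p q r) = ↑u := by
  rw [tw_unit] at h
  calc involute (↑u : G 𝔽 p q r)
      = involute ↑u * (involute (↑u⁻¹ : G 𝔽 p q r) * ↑u) := by rw [h, mul_one]
    _ = (involute ↑u * involute (↑u⁻¹ : G 𝔽 p q r)) * ↑u := by rw [mul_assoc]
    _ = ↑u := by rw [← map_mul, Units.mul_inv, map_one, one_mul]

lemma odd_of_tw_neg_one {u : (G 𝔽 p q r)ˣ} (h : tw 𝔽 p q r ↑u = -1) :
    involute (↑u : G 𝔽 p q r) = -↑u := by
  rw [tw_unit] at h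
  have h2 : involute (↑u : G 𝔽 p q r) * (involute (↑u⁻¹ : G 𝔽 p q r) * ↑u) = ↑u := by
    rw [← mul_assoc, ← map_mul, Units.mul_inv, map_one, one_mul]
  rw [h, mul_neg_one] at h2
  exact neg_eq_iff_eq_neg.mp h2

lemma mem_Epm_iff {T : G 𝔽 p q r} :
    T ∈ Epm 𝔽 p q r ↔ IsUnit T ∧ (involute T = T ∨ involute T = -T) := by
  rw [Epm, Set.mem_union]
  constructor
  · rintro (⟨hm, hu⟩ | ⟨hm, hu⟩)
    · exact ⟨hu, Or.inl hm⟩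
    · exact ⟨hu, Or.inr hm⟩
  · rintro ⟨hu, hm | hm⟩
    · exact Or.inl ⟨hm, hu⟩
    · exact Or.inr ⟨hm, hu⟩

lemma epm_of_tw {T : G 𝔽 p q r} (hT : IsUnit T)
    (h : tw 𝔽 p q r T = 1 ∨ tw 𝔽 p q r T = -1) : T ∈ Epm 𝔽 p q r := by
  obtain ⟨u, rfl⟩ := hT
  rcases h with h | h
  · exact mem_Epm_iff.mpr ⟨u.isUnit, Or.inl (even_of_tw_one h)⟩
  · exact mem_Epm_iff.mpr ⟨u.isUnit, Or.inr (odd_of_tw_neg_one h)⟩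

lemma backward_core {T : G 𝔽 p q r} (hT : IsUnit T)
    (hmem : tw 𝔽 p q r T ∈ G0 𝔽 p q r ⊔ radG 𝔽 p q r)
    (heven : involute (tw 𝔽 p q r T) = tw 𝔽 p q r T) : T ∈ Epm 𝔽 p q r :=
  epm_of_tw hT (lemA hmem (tw_sq_one hT heven))

end Aux4

section Aux5

variable {𝔽 : Type*} [RCLike 𝔽] {p q r : ℕ}

open CliffordAlgebra

local notation "n" => p + q + r

lemma radG_le_bot (hr : r = 0) : radG 𝔽 p q r ≤ ⊥ := by
  refine Submodule.span_le.mpr ?_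
  rintro x ⟨u, v, a, ha, rfl⟩
  exact absurd a.isLt (by omega)

lemma eTop_mem_radG (hr : 1 ≤ r) : eTop 𝔽 p q r ∈ radG 𝔽 p q r := by
  obtain ⟨r', rfl⟩ : ∃ r', r = r' + 1 := ⟨r - 1, by omega⟩
  rw [eTop, List.ofFn_succ', List.concat_eq_append, List.prod_append]
  simp only [List.prod_cons, List.prod_nil, mul_one]
  have h1 := mem_radG_gen (𝔽 := 𝔽) (p := p) (q := q) (r := r' + 1)
    (a := Fin.last (p + q + r')) (by rw [Fin.val_last]; omega)
    (List.ofFn fun i : Fin (p + q + r') =>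
      e 𝔽 p q (r' + 1) i.castSucc).prod 1
  rwa [mul_one] at h1

lemma Gn_le_radG (hr : 1 ≤ r) : Gn 𝔽 p q r ≤ radG 𝔽 p q r :=
  Submodule.span_le.mpr (Set.singleton_subset_iff.mpr (eTop_mem_radG hr))

lemma case4_r0 (hr0 : r = 0) (hn2 : Even n) (hn1 : 1 ≤ n) {T : G 𝔽 p q r} (hT : IsUnit T)
    (hmem : tw 𝔽 p q r T ∈ G0 𝔽 p q r ⊔ Gn 𝔽 p q r ⊔ radG0 𝔽 p q r) :
    T ∈ Epm 𝔽 p q r := by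
  have hle : G0 𝔽 p q r ⊔ Gn 𝔽 p q r ⊔ radG0 𝔽 p q r ≤ Geven 𝔽 p q r :=
    sup_le (sup_le G0_le_Geven (Gn_le_Geven hn2)) inf_le_right
  have heven : involute (tw 𝔽 p q r T) = tw 𝔽 p q r T := mem_Geven_iff.mp (hle hmem)
  have hsq := tw_sq_one hT heven
  obtain ⟨y, hy, z, hz, hyz⟩ := Submodule.mem_sup.mp hmem
  have hz0 : z = 0 := by
    have h1 : z ∈ (⊥ : Submodule 𝔽 (G 𝔽 p q r)) :=
      radG_le_bot hr0 (Submodule.mem_inf.mp hz).1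
    simpa using h1
  obtain ⟨y1, hy1, z1, hz1, hyz1⟩ := Submodule.mem_sup.mp hy
  obtain ⟨c, hc⟩ := mem_G0_iff.mp hy1
  obtain ⟨d, hd⟩ := Submodule.mem_span_singleton.mp hz1
  have hsplit : algebraMap 𝔽 _ c + d • eTop 𝔽 p q r = tw 𝔽 p q r T := by
    rw [← hyz, hz0, add_zero, ← hyz1, hc, hd]
  obtain ⟨ε, hε, hE2⟩ := eTop_sq_scalar (𝔽 := 𝔽) (p := p) (q := q) hr0
  have hXX : (algebraMap 𝔽 _ c + d • eTop 𝔽 p q r) *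
      (algebraMap 𝔽 _ c + d • eTop 𝔽 p q r)
      = algebraMap 𝔽 _ (c * c + d * d * ε) + (2 * (c * d)) • eTop 𝔽 p q r := by
    have e1 : algebraMap 𝔽 (G 𝔽 p q r) c * (d • eTop 𝔽 p q r) = (c * d) • eTop 𝔽 p q r := by
      rw [mul_smul_comm, ← Algebra.smul_def, smul_smul, mul_comm d c]
    have e2 : (d • eTop 𝔽 p q r) * algebraMap 𝔽 (G 𝔽 p q r) c = (c * d) • eTop 𝔽 p q r := by
      rw [smul_mul_assoc, ← Algebra.commutes c (eTop 𝔽 p q r), ← Algebra.smul_def,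
        smul_smul, mul_comm d c]
    have e3 : (d • eTop 𝔽 p q r) * (d • eTop 𝔽 p q r)
        = algebraMap 𝔽 (G 𝔽 p q r) (d * d * ε) := by
      rw [smul_mul_assoc, mul_smul_comm, smul_smul, hE2, Algebra.smul_def, ← map_mul]
    rw [add_mul, mul_add, mul_add, ← map_mul, e1, e2, e3, map_add
      (algebraMap 𝔽 (G 𝔽 p q r)), two_mul, add_smul]
    abel
  have heq : algebraMap 𝔽 _ (c * c + d * d * ε) + (2 * (c * d)) • eTop 𝔽 p q r = 1 := by
    have h2 := hsq
    rw [← hsplit, hXX] at h2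
    exact h2
  have hkey : algebraMap 𝔽 (G 𝔽 p q r) (c * c + d * d * ε - 1)
      = (-(2 * (c * d))) • eTop 𝔽 p q r := by
    rw [map_sub, map_one, neg_smul, ← heq]
    abel
  have hs1 : c * c + d * d * ε - 1 = 0 := scalar_eTop_indep hn2 hn1 hkey
  have hs1' : c * c + d * d * ε = 1 := sub_eq_zero.mp hs1
  have hB : (2 * (c * d)) • eTop 𝔽 p q r = 0 := by
    have h3 : algebraMap 𝔽 (G 𝔽 p q r) (c * c + d * d * ε) = 1 := by rw [hs1', map_one]
    rw [h3] at heq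
    exact add_eq_left.mp heq
  have hcd : c * d = 0 := by
    have h7 : ((2 * (c * d)) • eTop 𝔽 p q r) * eTop 𝔽 p q r = 0 := by rw [hB, zero_mul]
    rw [smul_mul_assoc, hE2, Algebra.smul_def, ← map_mul] at h7
    have h8 : 2 * (c * d) * ε = 0 := algebraMap_injG (by rw [h7, map_zero])
    rcases mul_eq_zero.mp h8 with h9 | h9
    · rcases mul_eq_zero.mp h9 with h10 | h10
      · exact absurd h10 two_ne_zero
      · exact h10
    · exact absurd h9 hε
  rcases mul_eq_zero.mp hcd with hc0 | hd0
  · -- c = 0 : contradiction via parity decomposition of T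
    exfalso
    subst hc0
    have hsE : tw 𝔽 p q r T = d • eTop 𝔽 p q r := by
      rw [← hsplit, map_zero, zero_add]
    obtain ⟨u, rfl⟩ := hT
    have hinv : involute (↑u : G 𝔽 p q r) = ↑u * tw 𝔽 p q r ↑u := by
      have h8 : (↑u⁻¹ : G 𝔽 p q r) * involute ↑u = tw 𝔽 p q r ↑u := by
        conv_rhs => rw [← heven, tw_unit, map_mul, involute_involute]
      rw [← h8, ← mul_assoc, Units.mul_inv, one_mul]
    set s := tw 𝔽 p q r ↑u with hs_def
    set T0 := (2 : 𝔽)⁻¹ • ((↑u : G 𝔽 p q r) + involute ↑u) with hT0def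
    set T1 := (2 : 𝔽)⁻¹ • ((↑u : G 𝔽 p q r) - involute ↑u) with hT1def
    have hT01 : T0 + T1 = ↑u := by
      rw [hT0def, hT1def, ← smul_add]
      rw [show ((↑u : G 𝔽 p q r) + involute ↑u) + ((↑u : G 𝔽 p q r) - involute ↑u)
        = (2 : 𝔽) • (↑u : G 𝔽 p q r) from by rw [two_smul]; abel]
      rw [smul_smul, inv_mul_cancel₀ (two_ne_zero (α := 𝔽)), one_smul]
    have hiT : T0 - T1 = involute (↑u : G 𝔽 p q r) := by
      rw [hT0def, hT1def, ← smul_sub]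
      rw [show ((↑u : G 𝔽 p q r) + involute ↑u) - ((↑u : G 𝔽 p q r) - involute ↑u)
        = (2 : 𝔽) • involute (↑u : G 𝔽 p q r) from by rw [two_smul]; abel]
      rw [smul_smul, inv_mul_cancel₀ (two_ne_zero (α := 𝔽)), one_smul]
    have hiT0 : involute T0 = T0 := by
      rw [hT0def, map_smul, map_add, involute_involute]
      exact congrArg (fun t => (2 : 𝔽)⁻¹ • t) (add_comm _ _)
    have hiT1 : involute T1 = -T1 := by
      rw [hT1def, map_smul, map_sub, involute_involute, ← smul_neg]
      exact congrArg (fun t => (2 : 𝔽)⁻¹ • t) (by abel)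
    have eqA : T0 - T1 = (T0 + T1) * s := by rw [hiT, hT01]; exact hinv
    have eqB : T0 + T1 = (T0 - T1) * s := by
      have h9 := congrArg (involute (Q := Q 𝔽 p q r)) eqA
      rw [map_sub, map_mul, map_add, hiT0, hiT1, heven, sub_neg_eq_add,
        ← sub_eq_add_neg] at h9
      exact h9
    have hT0s : T0 * s = T0 := by
      have h10 : T0 + T0 = T0 * s + T0 * s := by
        calc T0 + T0 = (T0 - T1) + (T0 + T1) := by abel
          _ = (T0 + T1) * s + (T0 - T1) * s := by rw [← eqA, ← eqB]
          _ = ((T0 + T1) + (T0 - T1)) * s := by rw [← add_mul]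
          _ = (T0 + T0) * s := by rw [show (T0 + T1) + (T0 - T1) = T0 + T0 from by abel]
          _ = T0 * s + T0 * s := by rw [add_mul]
      exact (half_cancel h10).symm
    have hT1s : T1 * s = -T1 := by
      have h10 : (-T1) + (-T1) = T1 * s + T1 * s := by
        calc (-T1) + (-T1) = (T0 - T1) - (T0 + T1) := by abel
          _ = (T0 + T1) * s - (T0 - T1) * s := by rw [← eqA, ← eqB]
          _ = ((T0 + T1) - (T0 - T1)) * s := by rw [← sub_mul]
          _ = (T1 + T1) * s := by rw [show (T0 + T1) - (T0 - T1) = T1 + T1 from by abel]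
          _ = T1 * s + T1 * s := by rw [add_mul]
      exact (half_cancel h10).symm
    have hsT0 : s * T0 = T0 := by
      calc s * T0 = d • (eTop 𝔽 p q r * T0) := by rw [hsE, smul_mul_assoc]
        _ = d • (T0 * eTop 𝔽 p q r) := by rw [eTop_swap hn2 T0, hiT0]
        _ = T0 * (d • eTop 𝔽 p q r) := by rw [mul_smul_comm]
        _ = T0 * s := by rw [← hsE]
        _ = T0 := hT0s
    have hsT1 : s * T1 = T1 := by
      calc s * T1 = d • (eTop 𝔽 p q r * T1) := by rw [hsE, smul_mul_assoc]
        _ = d • (-T1 * eTop 𝔽 p q r) := by rw [eTop_swap hn2 T1, hiT1]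
        _ = -(T1 * (d • eTop 𝔽 p q r)) := by rw [neg_mul, smul_neg, mul_smul_comm]
        _ = -(T1 * s) := by rw [← hsE]
        _ = T1 := by rw [hT1s, neg_neg]
    have hsu : s * ↑u = ↑u := by
      conv_lhs => rw [← hT01]
      rw [mul_add, hsT0, hsT1, hT01]
    have hs_one : s = 1 := by
      calc s = s * ↑u * ↑u⁻¹ := by rw [mul_assoc, Units.mul_inv, mul_one]
        _ = ↑u * ↑u⁻¹ := by rw [hsu]
        _ = 1 := Units.mul_inv u
    exact one_ne_zero (α := 𝔽) (scalar_eTop_indep hn2 hn1 (k := 1) (d := d)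
      (by rw [map_one, ← hs_one, hsE]))
  · -- d = 0 : scalar case
    subst hd0
    have hsd : tw 𝔽 p q r T = algebraMap 𝔽 _ c := by
      rw [← hsplit, zero_smul, add_zero]
    have hc2 : c * c = 1 := by
      simpa using hs1'
    rcases mul_self_eq_one_iff.mp hc2 with h | h
    · exact epm_of_tw hT (Or.inl (by rw [hsd, h, map_one]))
    · exact epm_of_tw hT (Or.inr (by rw [hsd, h, map_neg, map_one]))

end Aux5


lemma mem_ux_iff {𝔽 : Type*} [RCLike 𝔽] {p q r : ℕ} {S : Set (G 𝔽 p q r)} {x : G 𝔽 p q r} :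
    x ∈ ux 𝔽 p q r S ↔ x ∈ S ∧ IsUnit x := Iff.rfl

/-- Equivalent definitions of the group `P^±_{p,q,r} = 𝒢^{(0)×} ∪ 𝒢^{(1)×}`. -/
theorem stmt13 (hn : 1 ≤ p + q + r) :
    Epm 𝔽 p q r = {T : G 𝔽 p q r | IsUnit T ∧ tw 𝔽 p q r T ∈ ux 𝔽 p q r ↑(G0 𝔽 p q r)} ∧
    Epm 𝔽 p q r = {T : G 𝔽 p q r | IsUnit T ∧ tw 𝔽 p q r T ∈ ux 𝔽 p q r ↑(Λr0 𝔽 p q r)} ∧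
    Epm 𝔽 p q r = {T : G 𝔽 p q r | IsUnit T ∧ tw 𝔽 p q r T ∈ ux 𝔽 p q r ↑(G0 𝔽 p q r ⊔ radG0 𝔽 p q r)} ∧
    (Even (p + q + r) →
      Epm 𝔽 p q r = {T : G 𝔽 p q r | IsUnit T ∧ tw 𝔽 p q r T ∈ ux 𝔽 p q r ↑(G0 𝔽 p q r ⊔ Gn 𝔽 p q r ⊔ radG0 𝔽 p q r)}) := by
  classical
  have fwd : ∀ T ∈ Epm 𝔽 p q r, IsUnit T ∧ (tw 𝔽 p q r T = 1 ∨ tw 𝔽 p q r T = -1) := by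
    intro T hT
    obtain ⟨hu, h | h⟩ := mem_Epm_iff.mp hT
    · exact ⟨hu, Or.inl (tw_of_even hu h)⟩
    · exact ⟨hu, Or.inr (tw_of_odd hu h)⟩
  have memux : ∀ (W : Submodule 𝔽 (G 𝔽 p q r)), (1 : G 𝔽 p q r) ∈ W →
      ∀ x : G 𝔽 p q r, (x = 1 ∨ x = -1) → x ∈ ux 𝔽 p q r ↑W := by
    intro W h1 x hx
    rcases hx with rfl | rfl
    · exact mem_ux_iff.mpr ⟨SetLike.mem_coe.mpr h1, isUnit_one⟩
    · exact mem_ux_iff.mpr ⟨SetLike.mem_coe.mpr (neg_mem h1), isUnit_one.neg⟩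
  have h1G0 : (1 : G 𝔽 p q r) ∈ G0 𝔽 p q r := Submodule.mem_span_singleton_self 1
  have h1Λ : (1 : G 𝔽 p q r) ∈ Λr0 𝔽 p q r :=
    Submodule.mem_inf.mpr ⟨(Subalgebra.mem_toSubmodule _).mpr (one_mem _),
      mem_Geven_iff.mpr (map_one CliffordAlgebra.involute)⟩
  refine ⟨?_, ?_, ?_, fun hn2 => ?_⟩
  · ext T
    simp only [Set.mem_setOf_eq]
    constructor
    · intro hT
      obtain ⟨hu, htw⟩ := fwd T hT
      exact ⟨hu, memux _ h1G0 _ htw⟩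
    · rintro ⟨hu, hmem⟩
      have hW : tw 𝔽 p q r T ∈ G0 𝔽 p q r := SetLike.mem_coe.mp (mem_ux_iff.mp hmem).1
      exact backward_core hu (Submodule.mem_sup_left hW) (mem_Geven_iff.mp (G0_le_Geven hW))
  · ext T
    simp only [Set.mem_setOf_eq]
    constructor
    · intro hT
      obtain ⟨hu, htw⟩ := fwd T hT
      exact ⟨hu, memux _ h1Λ _ htw⟩
    · rintro ⟨hu, hmem⟩
      have hW : tw 𝔽 p q r T ∈ Λr0 𝔽 p q r := SetLike.mem_coe.mp (mem_ux_iff.mp hmem).1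
      obtain ⟨hΛ, hEv⟩ := Submodule.mem_inf.mp hW
      exact backward_core hu (Λr_le_G0_sup_radG hΛ) (mem_Geven_iff.mp hEv)
  · ext T
    simp only [Set.mem_setOf_eq]
    constructor
    · intro hT
      obtain ⟨hu, htw⟩ := fwd T hT
      exact ⟨hu, memux _ (Submodule.mem_sup_left h1G0) _ htw⟩
    · rintro ⟨hu, hmem⟩
      have hW : tw 𝔽 p q r T ∈ G0 𝔽 p q r ⊔ radG0 𝔽 p q r :=
        SetLike.mem_coe.mp (mem_ux_iff.mp hmem).1
      have hle : G0 𝔽 p q r ⊔ radG0 𝔽 p q r ≤ G0 𝔽 p q r ⊔ radG 𝔽 p q r :=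
        sup_le_sup_left inf_le_left _
      have hEv : CliffordAlgebra.involute (tw 𝔽 p q r T) = tw 𝔽 p q r T :=
        mem_Geven_iff.mp ((sup_le G0_le_Geven inf_le_right) hW)
      exact backward_core hu (hle hW) hEv
  · ext T
    simp only [Set.mem_setOf_eq]
    constructor
    · intro hT
      obtain ⟨hu, htw⟩ := fwd T hT
      exact ⟨hu, memux _ (Submodule.mem_sup_left (Submodule.mem_sup_left h1G0)) _ htw⟩
    · rintro ⟨hu, hmem⟩
      have hW : tw 𝔽 p q r T ∈ G0 𝔽 p q r ⊔ Gn 𝔽 p q r ⊔ radG0 𝔽 p q r :=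
        SetLike.mem_coe.mp (mem_ux_iff.mp hmem).1
      by_cases hr0 : r = 0
      · exact case4_r0 hr0 hn2 hn hu hW
      · have hr1 : 1 ≤ r := by omega
        have hle : G0 𝔽 p q r ⊔ Gn 𝔽 p q r ⊔ radG0 𝔽 p q r
            ≤ G0 𝔽 p q r ⊔ radG 𝔽 p q r :=
          sup_le (sup_le le_sup_left ((Gn_le_radG hr1).trans le_sup_right))
            (inf_le_left.trans le_sup_right)
        have hEv : CliffordAlgebra.involute (tw 𝔽 p q r T) = tw 𝔽 p q r T :=
          mem_Geven_iff.mp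
            ((sup_le (sup_le G0_le_Geven (Gn_le_Geven hn2)) inf_le_right) hW)
        exact backward_core hu (hle hW) hEv

end ClGA
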